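/- The map J: C^q_{m,p} → {increasing sequences 0 < i_1 < ⋯ < i_p of positive integers with i_p < i_1 + m + p}, defined by writing a = pl + r with 0 ≤ r < p and setting J(α^{(a)})_k = l(m+p) + α_{r+k} for 1 ≤ k ≤ p−r and J(α^{(a)})_k = (l+1)(m+p) + α_{k−p+r} for p−r < k ≤ p, is an order isomorphism onto its image and preserves rank: a(m+p) + ∑_j(α_j − j) = ∑_i(J(α^{(a)})_i − i). -/

import Mathlib

open Finset

/-- A quantum Plücker index `α^{(a)}`: a strictly increasing sequence
`α = (α_1 < ⋯ < α_p)` in `{1, …, m+p}` together with a degree `0 ≤ a ≤ q`. -/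
structure QPI (m p q : ℕ) where
  a : ℕ
  ha : a ≤ q
  α : Fin p → ℕ
  mono : StrictMono α
  lower : ∀ i, 1 ≤ α i
  upper : ∀ i, α i ≤ m + p

/-- The partial order on quantum Plücker indices: `α^{(a)} ≤ β^{(b)}` iff `a ≤ b` and
`α_i ≤ β_{b-a+i}` for `1 ≤ i ≤ p - b + a` (here `0`-indexed). -/
def qle {m p q : ℕ} (x y : QPI m p q) : Prop :=
  x.a ≤ y.a ∧ ∀ (i : Fin p) (h : (i : ℕ) + (y.a - x.a) < p),
    x.α i ≤ y.α ⟨(i : ℕ) + (y.a - x.a), h⟩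

/-- The rank `|α^{(a)}| = a(m+p) + ∑_i (α_i - i)`. -/
def qrank {m p q : ℕ} (x : QPI m p q) : ℕ :=
  x.a * (m + p) + ∑ i : Fin p, (x.α i - ((i : ℕ) + 1))

/-- `x` is covered by `y`. -/
def qcovby {m p q : ℕ} (x y : QPI m p q) : Prop :=
  qle x y ∧ x ≠ y ∧ ∀ z, qle x z → qle z y → z = x ∨ z = y

/-- The minimal element `(1, 2, …, p)^{(0)}`. -/
def qmin (m p q : ℕ) : QPI m p q where
  a := 0
  ha := Nat.zero_le q
  α := fun i => (i : ℕ) + 1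
  mono := fun _ _ h => Nat.succ_lt_succ h
  lower := fun _ => Nat.le_add_left 1 _
  upper := fun i => by show (i : ℕ) + 1 ≤ m + p; have := i.isLt; omega

/-- The embedding `J` of the poset of quantum Plücker indices into increasing
integer sequences, defined via `a = p·l + r`, `0 ≤ r < p`. -/
def Jmap {m p q : ℕ} (x : QPI m p q) : Fin p → ℕ := fun k =>
  if h : (k : ℕ) + x.a % p < p then
    (x.a / p) * (m + p) + x.α ⟨(k : ℕ) + x.a % p, h⟩
  else
    (x.a / p + 1) * (m + p) + x.α ⟨(k : ℕ) + x.a % p - p, by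
      have h1 := k.isLt
      have h2 : x.a % p < p := Nat.mod_lt _ k.pos
      omega⟩
section JAux

/-- Extension of a sequence `α` to all of `ℕ`, shifting by `m+p` each period. -/
def extSeq (m p : ℕ) (hp : 0 < p) (α : Fin p → ℕ) (n : ℕ) : ℕ :=
  n / p * (m + p) + α ⟨n % p, Nat.mod_lt n hp⟩

lemma extSeq_eq {m p : ℕ} (hp : 0 < p) (α : Fin p → ℕ) {n l j : ℕ} (hj : j < p)
    (h : n = p * l + j) : extSeq m p hp α n = l * (m + p) + α ⟨j, hj⟩ := by
  have h1 : n / p = l := by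
    rw [h, Nat.mul_add_div hp, Nat.div_eq_of_lt hj, Nat.add_zero]
  have h2 : n % p = j := by rw [h, Nat.mul_add_mod, Nat.mod_eq_of_lt hj]
  unfold extSeq
  rw [h1]
  congr 1
  exact congrArg α (Fin.ext h2)

lemma extSeq_pos {m p : ℕ} (hp : 0 < p) {α : Fin p → ℕ} (hlb : ∀ i, 1 ≤ α i) (n : ℕ) :
    0 < extSeq m p hp α n := by
  have := hlb ⟨n % p, Nat.mod_lt n hp⟩
  unfold extSeq
  omega

lemma extSeq_lt_succ {m p : ℕ} (hp : 0 < p) {α : Fin p → ℕ} (hmono : StrictMono α)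
    (hlb : ∀ i, 1 ≤ α i) (hub : ∀ i, α i ≤ m + p) (n : ℕ) : extSeq m p hp α n < extSeq m p hp α (n + 1) := by
  have hr : n % p < p := Nat.mod_lt n hp
  have hd := Nat.div_add_mod n p
  have e0 : extSeq m p hp α n = n / p * (m + p) + α ⟨n % p, hr⟩ := extSeq_eq hp α hr (by omega)
  by_cases h : n % p + 1 < p
  · have e1 : extSeq m p hp α (n + 1) = n / p * (m + p) + α ⟨n % p + 1, h⟩ :=
      extSeq_eq hp α h (by omega)
    have hlt : α ⟨n % p, hr⟩ < α ⟨n % p + 1, h⟩ :=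
      hmono (Fin.mk_lt_mk.mpr (Nat.lt_succ_self _))
    rw [e0, e1]
    omega
  · have e1 : extSeq m p hp α (n + 1) = (n / p + 1) * (m + p) + α ⟨0, hp⟩ := by
      refine extSeq_eq hp α hp ?_
      have hb : p * (n / p + 1) = p * (n / p) + p := by ring
      omega
    have h1 := hub ⟨n % p, hr⟩
    have h0 := hlb ⟨0, hp⟩
    have hb : (n / p + 1) * (m + p) = n / p * (m + p) + (m + p) := by ring
    rw [e0, e1]
    omega

lemma extSeq_strictMono {m p : ℕ} (hp : 0 < p) {α : Fin p → ℕ} (hmono : StrictMono α)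
    (hlb : ∀ i, 1 ≤ α i) (hub : ∀ i, α i ≤ m + p) : StrictMono (extSeq m p hp α) :=
  strictMono_nat_of_lt_succ (extSeq_lt_succ hp hmono hlb hub)

lemma extSeq_monotone {m p : ℕ} (hp : 0 < p) {α : Fin p → ℕ} (hmono : StrictMono α)
    (hub : ∀ i, α i ≤ m + p) : Monotone (extSeq m p hp α) := by
  refine monotone_nat_of_le_succ fun n => ?_
  have hr : n % p < p := Nat.mod_lt n hp
  have hd := Nat.div_add_mod n p
  have e0 : extSeq m p hp α n = n / p * (m + p) + α ⟨n % p, hr⟩ := extSeq_eq hp α hr (by omega)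
  by_cases h : n % p + 1 < p
  · have e1 : extSeq m p hp α (n + 1) = n / p * (m + p) + α ⟨n % p + 1, h⟩ :=
      extSeq_eq hp α h (by omega)
    have h1 : α ⟨n % p, hr⟩ < α ⟨n % p + 1, h⟩ :=
      hmono (Fin.mk_lt_mk.mpr (Nat.lt_succ_self _))
    rw [e0, e1]
    omega
  · have e1 : extSeq m p hp α (n + 1) = (n / p + 1) * (m + p) + α ⟨0, hp⟩ := by
      refine extSeq_eq hp α hp ?_
      have hb : p * (n / p + 1) = p * (n / p) + p := by ring
      omega
    have h1 := hub ⟨n % p, hr⟩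
    have hb : (n / p + 1) * (m + p) = n / p * (m + p) + (m + p) := by ring
    rw [e0, e1]
    omega

lemma extSeq_add_p {m p : ℕ} (hp : 0 < p) (α : Fin p → ℕ) (n : ℕ) :
    extSeq m p hp α (n + p) = extSeq m p hp α n + (m + p) := by
  have hr : n % p < p := Nat.mod_lt n hp
  have hd := Nat.div_add_mod n p
  have e0 : extSeq m p hp α n = n / p * (m + p) + α ⟨n % p, hr⟩ := extSeq_eq hp α hr (by omega)
  have e1 : extSeq m p hp α (n + p) = (n / p + 1) * (m + p) + α ⟨n % p, hr⟩ := by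
    refine extSeq_eq hp α hr ?_
    have hb : p * (n / p + 1) = p * (n / p) + p := by ring
    omega
  have hb : (n / p + 1) * (m + p) = n / p * (m + p) + (m + p) := by ring
  rw [e0, e1]
  omega

lemma Jmap_eq_ext {m p q : ℕ} (hp : 0 < p) (x : QPI m p q) (k : Fin p) :
    Jmap x k = extSeq m p hp x.α ((k : ℕ) + x.a) := by
  have hd := Nat.div_add_mod x.a p
  have hr : x.a % p < p := Nat.mod_lt _ hp
  have hk := k.isLt
  unfold Jmap
  split
  · next h =>
    exact (extSeq_eq hp x.α (l := x.a / p) (j := (k : ℕ) + x.a % p) h (by omega)).symm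
  · next h =>
    refine (extSeq_eq hp x.α (l := x.a / p + 1) (j := (k : ℕ) + x.a % p - p) (by omega) ?_).symm
    have hb : p * (x.a / p + 1) = p * (x.a / p) + p := by ring
    omega

lemma extSeq_le_ext {m p : ℕ} (hp : 0 < p) {α β : Fin p → ℕ}
    (hub : ∀ i, α i ≤ m + p) (hlb : ∀ i, 1 ≤ β i) {a b : ℕ} (hab : a ≤ b)
    (hcond : ∀ (i : Fin p) (h : (i : ℕ) + (b - a) < p), α i ≤ β ⟨(i : ℕ) + (b - a), h⟩)
    (n : ℕ) : extSeq m p hp α (n + a) ≤ extSeq m p hp β (n + b) := by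
  obtain ⟨l, i, hi, hN⟩ : ∃ l i, i < p ∧ n + a = p * l + i :=
    ⟨(n + a) / p, (n + a) % p, Nat.mod_lt _ hp, (Nat.div_add_mod _ p).symm⟩
  obtain ⟨s, t, ht, hD⟩ : ∃ s t, t < p ∧ b - a = p * s + t :=
    ⟨(b - a) / p, (b - a) % p, Nat.mod_lt _ hp, (Nat.div_add_mod _ p).symm⟩
  have eα : extSeq m p hp α (n + a) = l * (m + p) + α ⟨i, hi⟩ := extSeq_eq hp α hi hN
  by_cases hit : i + t < p
  · have eβ : extSeq m p hp β (n + b) = (l + s) * (m + p) + β ⟨i + t, hit⟩ := by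
      refine extSeq_eq hp β hit ?_
      have hb1 : p * (l + s) = p * l + p * s := by ring
      omega
    rw [eα, eβ]
    rcases Nat.eq_zero_or_pos s with rfl | hs
    · have hz : p * 0 = 0 := by ring
      have h' : (i : ℕ) + (b - a) < p := by omega
      have hc := hcond ⟨i, hi⟩ h'
      have he : β ⟨(⟨i, hi⟩ : Fin p).val + (b - a), h'⟩ = β ⟨i + t, hit⟩ :=
        congrArg β (Fin.ext (show i + (b - a) = i + t by omega))
      have hb : (l + 0) * (m + p) = l * (m + p) := by ring
      omega
    · have h1 := hub ⟨i, hi⟩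
      have hb : (l + s) * (m + p) = l * (m + p) + s * (m + p) := by ring
      have hs' : m + p ≤ s * (m + p) := Nat.le_mul_of_pos_left _ hs
      omega
  · have hit2 : i + t - p < p := by omega
    have eβ : extSeq m p hp β (n + b) = (l + s + 1) * (m + p) + β ⟨i + t - p, hit2⟩ := by
      refine extSeq_eq hp β hit2 ?_
      have hb1 : p * (l + s + 1) = p * l + p * s + p := by ring
      omega
    rw [eα, eβ]
    have h1 := hub ⟨i, hi⟩
    have h2 := hlb ⟨i + t - p, hit2⟩
    have hb : (l + s + 1) * (m + p) = l * (m + p) + s * (m + p) + (m + p) := by ring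
    omega

lemma le_a_of_extSeq_le {m p : ℕ} (hp : 0 < p) {α β : Fin p → ℕ}
    (hαlb : ∀ i, 1 ≤ α i) (hβmono : StrictMono β) (hβub : ∀ i, β i ≤ m + p)
    {a b : ℕ}
    (hle : ∀ k : Fin p, extSeq m p hp α ((k : ℕ) + a) ≤ extSeq m p hp β ((k : ℕ) + b)) :
    a ≤ b := by
  by_contra hab
  push_neg at hab
  obtain ⟨k, hk, T, hT1, hT2⟩ : ∃ k, k < p ∧ ∃ T, 1 ≤ T ∧ k + a = p * T := by
    obtain ⟨l, r, hr, rfl⟩ : ∃ l r, r < p ∧ a = p * l + r :=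
      ⟨a / p, a % p, Nat.mod_lt _ hp, (Nat.div_add_mod a p).symm⟩
    rcases Nat.eq_zero_or_pos r with rfl | hr0
    · refine ⟨0, hp, l, ?_, by ring⟩
      rcases Nat.eq_zero_or_pos l with rfl | hl
      · exfalso
        have hz : p * 0 = 0 := by ring
        omega
      · exact hl
    · refine ⟨p - r, by omega, l + 1, by omega, ?_⟩
      have : p * (l + 1) = p * l + p := by ring
      omega
  have hp1 : p - 1 < p := by omega
  have h1 : extSeq m p hp α (k + a) = T * (m + p) + α ⟨0, hp⟩ := extSeq_eq hp α hp (by omega)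
  have h2 : extSeq m p hp β (k + b) ≤ extSeq m p hp β (k + a - 1) :=
    extSeq_monotone hp hβmono hβub (by omega)
  have h3 : extSeq m p hp β (k + a - 1) = (T - 1) * (m + p) + β ⟨p - 1, hp1⟩ := by
    refine extSeq_eq hp β hp1 ?_
    have hT : T - 1 + 1 = T := by omega
    have hb : p * (T - 1) + p = p * T := by
      calc p * (T - 1) + p = p * (T - 1 + 1) := by ring
        _ = p * T := by rw [hT]
    omega
  have h4 : extSeq m p hp α (k + a) ≤ extSeq m p hp β (k + b) := hle ⟨k, hk⟩
  have h5 := hαlb ⟨0, hp⟩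
  have h6 := hβub ⟨p - 1, hp1⟩
  have hb2 : (T - 1) * (m + p) + (m + p) = T * (m + p) := by
    have hT : T - 1 + 1 = T := by omega
    calc (T - 1) * (m + p) + (m + p) = (T - 1 + 1) * (m + p) := by ring
      _ = T * (m + p) := by rw [hT]
  omega

lemma cond_of_extSeq_le {m p : ℕ} (hp : 0 < p) {α β : Fin p → ℕ} {a b : ℕ} (hab : a ≤ b)
    (hle : ∀ k : Fin p, extSeq m p hp α ((k : ℕ) + a) ≤ extSeq m p hp β ((k : ℕ) + b))
    (i : Fin p) (h : (i : ℕ) + (b - a) < p) :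
    α i ≤ β ⟨(i : ℕ) + (b - a), h⟩ := by
  obtain ⟨l, r, hr, rfl⟩ : ∃ l r, r < p ∧ a = p * l + r :=
    ⟨a / p, a % p, Nat.mod_lt _ hp, (Nat.div_add_mod a p).symm⟩
  obtain ⟨k, hk, L, hL⟩ : ∃ k, k < p ∧ ∃ L, k + (p * l + r) = p * L + (i : ℕ) := by
    rcases le_or_gt r (i : ℕ) with hc | hc
    · exact ⟨(i : ℕ) - r, by have := i.isLt; omega, l, by omega⟩
    · refine ⟨(i : ℕ) + p - r, by have := i.isLt; omega, l + 1, ?_⟩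
      have : p * (l + 1) = p * l + p := by ring
      omega
  have e1 : extSeq m p hp α (k + (p * l + r)) = L * (m + p) + α ⟨(i : ℕ), i.isLt⟩ :=
    extSeq_eq hp α i.isLt hL
  have e2 : extSeq m p hp β (k + b) = L * (m + p) + β ⟨(i : ℕ) + (b - (p * l + r)), h⟩ := by
    refine extSeq_eq hp β h ?_
    omega
  have h4 : extSeq m p hp α (k + (p * l + r)) ≤ extSeq m p hp β (k + b) := hle ⟨k, hk⟩
  rw [e1, e2] at h4
  have hα : α ⟨(i : ℕ), i.isLt⟩ = α i := congrArg α (Fin.ext rfl)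
  omega

end JAux
lemma qle_iff_pointwise {m p q : ℕ} (hp : 0 < p) (x y : QPI m p q) :
    qle x y ↔ ∀ k, Jmap x k ≤ Jmap y k := by
  constructor
  · rintro ⟨h1, h2⟩ k
    rw [Jmap_eq_ext hp, Jmap_eq_ext hp]
    exact extSeq_le_ext hp x.upper y.lower h1 h2 (k : ℕ)
  · intro h
    have h' : ∀ k : Fin p, extSeq m p hp x.α ((k : ℕ) + x.a) ≤ extSeq m p hp y.α ((k : ℕ) + y.a) := by
      intro k
      have := h k
      rwa [Jmap_eq_ext hp, Jmap_eq_ext hp] at this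
    exact ⟨le_a_of_extSeq_le hp x.lower y.mono y.upper h',
      cond_of_extSeq_le hp (le_a_of_extSeq_le hp x.lower y.mono y.upper h') h'⟩

lemma qle_antisymm {m p q : ℕ} {x y : QPI m p q} (h1 : qle x y) (h2 : qle y x) : x = y := by
  obtain ⟨ha1, hc1⟩ := h1
  obtain ⟨ha2, hc2⟩ := h2
  have hab : x.a = y.a := le_antisymm ha1 ha2
  have hα : x.α = y.α := by
    funext i
    have e1 := hc1 i (show (i : ℕ) + (y.a - x.a) < p by have := i.isLt; omega)
    have e2 := hc2 i (show (i : ℕ) + (x.a - y.a) < p by have := i.isLt; omega)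
    refine le_antisymm
      (e1.trans (le_of_eq (congrArg y.α (Fin.ext (show (i : ℕ) + (y.a - x.a) = (i : ℕ) by omega)))))
      (e2.trans (le_of_eq (congrArg x.α (Fin.ext (show (i : ℕ) + (x.a - y.a) = (i : ℕ) by omega)))))
  obtain ⟨a1, _, α1, _, _, _⟩ := x
  obtain ⟨a2, _, α2, _, _, _⟩ := y
  simp only at hab hα
  subst hab
  subst hα
  rfl

open Fin.NatCast in
lemma sum_div_window {p : ℕ} (hp : 0 < p) (a : ℕ) :
    ∑ k : Fin p, ((k : ℕ) + a) / p = a := by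
  have : NeZero p := ⟨hp.ne'⟩
  have hk : ∀ k : Fin p, ((k : ℕ) + a) % p = ((k + (a : Fin p) : Fin p) : ℕ) := by
    intro k
    rw [Fin.val_add, Fin.val_natCast, Nat.add_mod_mod]
  have h1 : ∑ k : Fin p, ((k : ℕ) + a) = (∑ k : Fin p, (k : ℕ)) + p * a := by
    rw [Finset.sum_add_distrib]
    simp [Finset.card_univ, mul_comm]
  have h2 : ∑ k : Fin p, ((k : ℕ) + a) % p = ∑ k : Fin p, (k : ℕ) := by
    calc ∑ k : Fin p, ((k : ℕ) + a) % p
        = ∑ k : Fin p, ((k + (a : Fin p) : Fin p) : ℕ) :=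
          Finset.sum_congr rfl fun k _ => hk k
      _ = ∑ k : Fin p, (k : ℕ) :=
          Fintype.sum_equiv (Equiv.addRight (a : Fin p)) _ _ (fun k => rfl)
  have h3 : ∑ k : Fin p, ((k : ℕ) + a)
      = p * (∑ k : Fin p, ((k : ℕ) + a) / p) + ∑ k : Fin p, ((k : ℕ) + a) % p := by
    rw [Finset.mul_sum, ← Finset.sum_add_distrib]
    exact Finset.sum_congr rfl fun k _ => (Nat.div_add_mod _ p).symm
  have h4 : p * (∑ k : Fin p, ((k : ℕ) + a) / p) = p * a := by omega
  exact Nat.eq_of_mul_eq_mul_left hp h4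

open Fin.NatCast in
lemma sum_Jmap {m p q : ℕ} (hp : 0 < p) (x : QPI m p q) :
    ∑ k : Fin p, Jmap x k = x.a * (m + p) + ∑ i : Fin p, x.α i := by
  have : NeZero p := ⟨hp.ne'⟩
  have hk : ∀ k : Fin p, ((k : ℕ) + x.a) % p = ((k + (x.a : Fin p) : Fin p) : ℕ) := by
    intro k
    rw [Fin.val_add, Fin.val_natCast, Nat.add_mod_mod]
  have e : ∀ k : Fin p, Jmap x k = ((k : ℕ) + x.a) / p * (m + p) + x.α (k + (x.a : Fin p)) := by
    intro k
    rw [Jmap_eq_ext hp]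
    unfold extSeq
    congr 1
    exact congrArg x.α (Fin.ext (hk k))
  calc ∑ k : Fin p, Jmap x k
      = ∑ k : Fin p, (((k : ℕ) + x.a) / p * (m + p) + x.α (k + (x.a : Fin p))) :=
        Finset.sum_congr rfl fun k _ => e k
    _ = (∑ k : Fin p, ((k : ℕ) + x.a) / p) * (m + p)
        + ∑ k : Fin p, x.α (k + (x.a : Fin p)) := by
        rw [Finset.sum_add_distrib, Finset.sum_mul]
    _ = x.a * (m + p) + ∑ i : Fin p, x.α i := by
        rw [sum_div_window hp]
        congr 1
        exact Fintype.sum_equiv (Equiv.addRight (x.a : Fin p)) _ _ (fun k => rfl)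

lemma lb_of_strictMono {p : ℕ} {α : Fin p → ℕ} (hmono : StrictMono α)
    (hlb : ∀ i, 1 ≤ α i) (i : Fin p) : (i : ℕ) + 1 ≤ α i := by
  obtain ⟨j, hj⟩ := i
  induction j with
  | zero => simpa using hlb ⟨0, hj⟩
  | succ n ih =>
    have h1 := ih (by omega)
    have h2 : α ⟨n, by omega⟩ < α ⟨n + 1, hj⟩ := hmono (Fin.mk_lt_mk.mpr (Nat.lt_succ_self n))
    simp only [Fin.val_mk] at h1 ⊢
    omega

lemma Jmap_lb {m p q : ℕ} (hp : 0 < p) (x : QPI m p q) (k : Fin p) :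
    (k : ℕ) + 1 ≤ Jmap x k := by
  have hr : ((k : ℕ) + x.a) % p < p := Nat.mod_lt _ hp
  have hd := Nat.div_add_mod ((k : ℕ) + x.a) p
  have e : Jmap x k = ((k : ℕ) + x.a) / p * (m + p)
      + x.α ⟨((k : ℕ) + x.a) % p, hr⟩ := by
    rw [Jmap_eq_ext hp]
    exact extSeq_eq hp x.α hr (Nat.div_add_mod _ p).symm
  have h1 := lb_of_strictMono x.mono x.lower ⟨((k : ℕ) + x.a) % p, hr⟩
  simp only [Fin.val_mk] at h1
  have h2 : ((k : ℕ) + x.a) / p * p ≤ ((k : ℕ) + x.a) / p * (m + p) :=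
    Nat.mul_le_mul_left _ (by omega)
  have h3 : p * (((k : ℕ) + x.a) / p) = ((k : ℕ) + x.a) / p * p := by ring
  have h4 := k.isLt
  omega

/-- The map `J` is an order isomorphism of `C^q_{m,p}` onto its image in the poset of
increasing sequences `0 < i_1 < ⋯ < i_p` of positive integers with `i_p < i_1 + m + p`
(ordered componentwise), and it preserves rank:
`a(m+p) + ∑_j (α_j - j) = ∑_i (J(α^{(a)})_i - i)`. -/
theorem Jmap_order_iso (m p q : ℕ) (hm : 1 ≤ m) (hp : 0 < p) :
    (∀ x : QPI m p q, StrictMono (Jmap x) ∧ 0 < Jmap x ⟨0, hp⟩ ∧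
        Jmap x ⟨p - 1, by omega⟩ < Jmap x ⟨0, hp⟩ + m + p) ∧
    (∀ x y : QPI m p q, qle x y ↔ ∀ k, Jmap x k ≤ Jmap y k) ∧
    Function.Injective (Jmap (m := m) (p := p) (q := q)) ∧
    (∀ x : QPI m p q, qrank x = ∑ i : Fin p, (Jmap x i - ((i : ℕ) + 1))) := by
  refine ⟨?_, fun x y => qle_iff_pointwise hp x y, ?_, ?_⟩
  · intro x
    refine ⟨?_, ?_, ?_⟩
    · intro j k hjk
      rw [Jmap_eq_ext hp, Jmap_eq_ext hp]
      exact extSeq_strictMono hp x.mono x.lower x.upper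
        (Nat.add_lt_add_right (Fin.lt_def.mp hjk) x.a)
    · rw [Jmap_eq_ext hp]
      exact extSeq_pos hp x.lower _
    · rw [Jmap_eq_ext hp, Jmap_eq_ext hp]
      show extSeq m p hp x.α (p - 1 + x.a) < extSeq m p hp x.α (0 + x.a) + m + p
      rw [Nat.zero_add]
      have h1 : extSeq m p hp x.α (p - 1 + x.a) < extSeq m p hp x.α (x.a + p) :=
        extSeq_strictMono hp x.mono x.lower x.upper (by omega)
      have h2 : extSeq m p hp x.α (x.a + p) = extSeq m p hp x.α x.a + (m + p) :=
        extSeq_add_p hp x.α x.a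
      omega
  · intro x y hxy
    have h1 : qle x y := (qle_iff_pointwise hp x y).mpr fun k => (congrFun hxy k).le
    have h2 : qle y x := (qle_iff_pointwise hp y x).mpr fun k => (congrFun hxy k).ge
    exact qle_antisymm h1 h2
  · intro x
    have e1 : ∑ i : Fin p, (x.α i - ((i : ℕ) + 1)) + ∑ i : Fin p, ((i : ℕ) + 1)
        = ∑ i : Fin p, x.α i := by
      rw [← Finset.sum_add_distrib]
      exact Finset.sum_congr rfl fun i _ =>
        Nat.sub_add_cancel (lb_of_strictMono x.mono x.lower i)
    have e2 : ∑ i : Fin p, (Jmap x i - ((i : ℕ) + 1)) + ∑ i : Fin p, ((i : ℕ) + 1)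
        = ∑ i : Fin p, Jmap x i := by
      rw [← Finset.sum_add_distrib]
      exact Finset.sum_congr rfl fun i _ => Nat.sub_add_cancel (Jmap_lb hp x i)
    have e3 := sum_Jmap hp x
    unfold qrank
    omega
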